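/- Let $x$ be an $n \times n$ matrix over a commutative ring, and define the $n \times n$ matrix $M$ by $M_{ij} = (-1)^{i-j} \Delta^{I_i \setminus \{j\},\, I_{i-1}}(x)$, where $I_k = \{1,\dots,k\}$, $\Delta^{A,B}$ denotes the minor with rows $A$ and columns $B$ taken in increasing order, and by convention $\Delta^{A,B}(x) = 0$ when $|A| \neq |B|$ and $\Delta^{\emptyset,\emptyset}(x) = 1$. Then $M$ is lower triangular, its $i$th diagonal entry is the leading principal minor $\Delta^{I_{i-1},I_{i-1}}(x)$, and the product $M x$ is upper triangular. -/
import Mathlib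


/-- The minor `Δ^{A,B}(x)`: determinant of the submatrix of `x` with rows indexed
by `A` and columns indexed by `B`, both taken in increasing order. By convention
it is `0` when `|A| ≠ |B|` and `Δ^{∅,∅}(x) = 1`. -/
def minor {n : ℕ} {R : Type*} [CommRing R] (x : Matrix (Fin n) (Fin n) R)
    (A B : Finset (Fin n)) : R :=
  if h : A.card = B.card then
    Matrix.det (Matrix.of fun i j : Fin A.card =>
      x (A.orderEmbOfFin rfl i) (B.orderEmbOfFin h.symm j))
  else 0

lemma minor_eq_det {n : ℕ} {R : Type*} [CommRing R] (x : Matrix (Fin n) (Fin n) R)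
    (A B : Finset (Fin n)) {k : ℕ} (hA : A.card = k) (hB : B.card = k) :
    minor x A B = Matrix.det (Matrix.of fun i j : Fin k =>
      x (A.orderEmbOfFin hA i) (B.orderEmbOfFin hB j)) := by
  subst hA
  rw [minor, dif_pos hB.symm]

def eAux {n : ℕ} (m : ℕ) (h : m < n) : Fin (m + 1) → Fin n :=
  fun i => ⟨i, by omega⟩

def gAux {n : ℕ} (m : ℕ) (h : m < n) : Fin m → Fin n :=
  fun q => ⟨q, by omega⟩

lemma key3 {n : ℕ} {R : Type*} [CommRing R] (x : Matrix (Fin n) (Fin n) R)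
    {m : ℕ} (hmn : m < n) (b : Fin n) (hbm : (b : ℕ) < m) :
    ∑ i : Fin (m + 1), (-1 : R) ^ ((i : ℕ) + m) *
      minor x ((Finset.Iic (⟨m, hmn⟩ : Fin n)).erase (eAux m hmn i))
        (Finset.Iio (⟨m, hmn⟩ : Fin n)) * x (eAux m hmn i) b = 0 := by
  set a : Fin n := ⟨m, hmn⟩ with ha
  -- the auxiliary matrix
  set Y : Matrix (Fin (m + 1)) (Fin (m + 1)) R := Matrix.of fun i j =>
    x (eAux m hmn i) (if h : (j : ℕ) < m then gAux m hmn ⟨j, h⟩ else b) with hY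
  have hYdet : Y.det = 0 := by
    apply Matrix.det_zero_of_column_eq (i := (⟨(b : ℕ), by omega⟩ : Fin (m + 1)))
      (j := Fin.last m)
    · intro h
      have : (b : ℕ) = m := congrArg Fin.val h
      omega
    · intro k
      have h1 : ((⟨(b : ℕ), by omega⟩ : Fin (m + 1)) : ℕ) < m := hbm
      have h2 : ¬ ((Fin.last m : Fin (m + 1)) : ℕ) < m := by simp
      simp only [hY, Matrix.of_apply, dif_pos h1, dif_neg h2]
      exact congrArg (x (eAux m hmn k)) (Fin.ext rfl)
  have hexp := Matrix.det_succ_column Y (Fin.last m)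
  rw [hYdet] at hexp
  have hcard : ∀ i : Fin (m + 1), ((Finset.Iic a).erase (eAux m hmn i)).card = m := by
    intro i
    rw [Finset.card_erase_of_mem (by
      rw [Finset.mem_Iic]
      show (i : ℕ) ≤ m
      omega), Fin.card_Iic]
    rfl
  have hcardB : (Finset.Iio a).card = m := Fin.card_Iio a
  have hgemb : ∀ q : Fin m, (Finset.Iio a).orderEmbOfFin hcardB q = gAux m hmn q := by
    have := Finset.orderEmbOfFin_unique hcardB (f := gAux m hmn)
      (fun q => Finset.mem_Iio.mpr (show (q : ℕ) < m from q.isLt))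
      (fun p q h => show (p : ℕ) < (q : ℕ) from h)
    exact fun q => (congrFun this q).symm
  have hminor : ∀ i : Fin (m + 1),
      minor x ((Finset.Iic a).erase (eAux m hmn i)) (Finset.Iio a) =
        Matrix.det (Y.submatrix i.succAbove (Fin.last m).succAbove) := by
    intro i
    rw [minor_eq_det x _ _ (hcard i) hcardB]
    have hfemb : ∀ p : Fin m,
        ((Finset.Iic a).erase (eAux m hmn i)).orderEmbOfFin (hcard i) p =
          eAux m hmn (i.succAbove p) := by
      have := Finset.orderEmbOfFin_unique (hcard i)
        (f := fun p => eAux m hmn (i.succAbove p))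
        (fun p => by
          rw [Finset.mem_erase]
          refine ⟨fun h => (Fin.succAbove_ne i p) ?_, ?_⟩
          · have hv := congrArg Fin.val h
            exact Fin.ext hv
          rw [Finset.mem_Iic]
          show ((i.succAbove p : Fin (m+1)) : ℕ) ≤ m
          omega)
        (fun p q h => show ((i.succAbove p : Fin (m+1)) : ℕ) < _ from
          Fin.succAbove_lt_succAbove_iff.mpr h)
      exact fun p => (congrFun this p).symm
    congr 1
    funext p q
    have hcs : (((Fin.last m).succAbove q : Fin (m + 1)) : ℕ) < m := by
      rw [Fin.succAbove_last]
      exact q.isLt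
    simp only [Matrix.of_apply, Matrix.submatrix_apply, hY, dif_pos hcs, hfemb, hgemb]
    congr 1
    apply congrArg
    apply Fin.ext
    simp [Fin.succAbove_last]
  calc ∑ i : Fin (m + 1), (-1 : R) ^ ((i : ℕ) + m) *
        minor x ((Finset.Iic a).erase (eAux m hmn i)) (Finset.Iio a) * x (eAux m hmn i) b
      = ∑ i : Fin (m + 1), (-1) ^ ((i : ℕ) + ((Fin.last m : Fin (m+1)) : ℕ)) *
          Y i (Fin.last m) * (Y.submatrix i.succAbove (Fin.last m).succAbove).det := by
        apply Finset.sum_congr rfl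
        intro i _
        rw [hminor i]
        have hYl : Y i (Fin.last m) = x (eAux m hmn i) b := by
          simp only [hY, Matrix.of_apply]
          rw [dif_neg (by simp)]
        rw [hYl]
        have : ((Fin.last m : Fin (m+1)) : ℕ) = m := rfl
        rw [this]
        ring
    _ = 0 := hexp.symm

/-- The matrix `M` with entries `M_{ij} = (-1)^{i-j} Δ^{Iᵢ \ {j}, Iᵢ₋₁}(x)`
(in 0-based indexing, `Iᵢ \ {j}` is `(Iic a).erase b` and `Iᵢ₋₁` is `Iio a`;
note `(-1)^{i-j} = (-1)^{i+j}`) is lower triangular, its `i`-th diagonal entry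
is the leading principal minor `Δ^{Iᵢ₋₁, Iᵢ₋₁}(x)`, and `M x` is upper
triangular. -/
theorem M_lower_triangular_and_Mx_upper_triangular {n : ℕ} {R : Type*} [CommRing R]
    (x M : Matrix (Fin n) (Fin n) R)
    (hM : ∀ a b : Fin n,
      M a b = (-1 : R) ^ ((a : ℕ) + (b : ℕ)) *
        minor x ((Finset.Iic a).erase b) (Finset.Iio a)) :
    (∀ a b : Fin n, a < b → M a b = 0) ∧
    (∀ a : Fin n, M a a = minor x (Finset.Iio a) (Finset.Iio a)) ∧
    (∀ a b : Fin n, b < a → (M * x) a b = 0) := by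
  have key1 : ∀ a b : Fin n, a < b → M a b = 0 := by
    intro a b hab
    rw [hM]
    have herase : (Finset.Iic a).erase b = Finset.Iic a :=
      Finset.erase_eq_of_notMem (by simp [Finset.mem_Iic, not_le.2 hab])
    rw [herase, minor, dif_neg, mul_zero]
    rw [Fin.card_Iic, Fin.card_Iio]
    omega
  refine ⟨key1, ?_, ?_⟩
  · intro a
    rw [hM, Finset.Iic_erase,
      Even.neg_one_pow ⟨(a : ℕ), rfl⟩, one_mul]
  · intro a b hba
    obtain ⟨m, hmn⟩ := a
    have hbm : (b : ℕ) < m := hba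
    rw [Matrix.mul_apply]
    have hsum : ∑ k : Fin n, M ⟨m, hmn⟩ k * x k b =
        ∑ i : Fin (m + 1), M ⟨m, hmn⟩ (eAux m hmn i) * x (eAux m hmn i) b := by
      rw [← Finset.sum_subset (Finset.subset_univ (Finset.Iic (⟨m, hmn⟩ : Fin n)))
        (fun k _ hk => by
          rw [key1 _ k (by simpa [Finset.mem_Iic, not_le] using hk), zero_mul])]
      refine (Finset.sum_nbij' (i := eAux m hmn)
        (j := fun k => (⟨min (k : ℕ) m, by omega⟩ : Fin (m + 1)))
        (fun i _ => Finset.mem_Iic.mpr (show ((eAux m hmn i : Fin n) : ℕ) ≤ m by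
          show (i : ℕ) ≤ m; omega))
        (fun k _ => Finset.mem_univ _)
        (fun i _ => Fin.ext (by
          show min ((i : ℕ)) m = (i : ℕ)
          omega))
        (fun k hk => Fin.ext (by
          have hkm : (k : ℕ) ≤ m := by simpa [Finset.mem_Iic, Fin.le_def] using hk
          show min ((k : ℕ)) m = (k : ℕ)
          omega))
        (fun i _ => rfl)).symm
    rw [hsum]
    have hterm : ∀ i : Fin (m + 1),
        M ⟨m, hmn⟩ (eAux m hmn i) * x (eAux m hmn i) b =
          (-1 : R) ^ ((i : ℕ) + m) *
            minor x ((Finset.Iic (⟨m, hmn⟩ : Fin n)).erase (eAux m hmn i))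
              (Finset.Iio (⟨m, hmn⟩ : Fin n)) * x (eAux m hmn i) b := by
      intro i
      rw [hM]
      congr 2
      show (-1 : R) ^ (m + (i : ℕ)) = _
      rw [add_comm]
    rw [Finset.sum_congr rfl (fun i _ => hterm i)]
    exact key3 x hmn b hbm
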